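/- In the Log-DenseNet connection graph on vertices {0,...,L}, where vertex i connects to i - 2^k for each k with 0 ≤ k ≤ floor(log2 i) and 2^k ≤ i, for every t ≥ 0 and all i > j with i - j ≤ 2^t, the shortest-path distance from i to j is at most t + 1. -/

import Mathlib

def stepsTo {α : Type*} (E : α → α → Prop) : ℕ → α → α → Prop
  | 0, i, j => i = j
  | m + 1, i, j => ∃ k, E i k ∧ stepsTo E m k j

/-- Log-DenseNet connection graph: vertex `i` connects to `i - 2^k` for `0 ≤ k ≤ ⌊log₂ i⌋`
(so that `2^k ≤ i`). -/
def logDenseEdge (L : ℕ) (i j : ℕ) : Prop :=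
  1 ≤ i ∧ i ≤ L ∧ ∃ k ≤ Nat.log 2 i, 2 ^ k ≤ i ∧ j = i - 2 ^ k

/-- For every `t ≥ 0` and all `i > j` with `i - j ≤ 2^t`, the shortest-path distance
from `i` to `j` is at most `t + 1`. -/
theorem stmt1 (L t i j : ℕ) (hi : i ≤ L) (hij : j < i) (h : i - j ≤ 2 ^ t) :
    ∃ m ≤ t + 1, stepsTo (logDenseEdge L) m i j := by
  induction t generalizing i j with
  | zero =>
    have hji : i = j + 1 := by omega
    refine ⟨1, le_refl _, j, ?_, rfl⟩
    exact ⟨by omega, hi, 0, Nat.zero_le _, by omega, by omega⟩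
  | succ t ih =>
    by_cases hc : i - j ≤ 2 ^ t
    · obtain ⟨m, hm, hs⟩ := ih i j hi hij hc
      exact ⟨m, by omega, hs⟩
    · push_neg at hc
      have hpow : 2 ^ t < i := by omega
      have hlog : t ≤ Nat.log 2 i :=
        (Nat.le_log_iff_pow_le one_lt_two (by omega)).mpr (le_of_lt hpow)
      set i' := i - 2 ^ t with hi'
      have hji' : j < i' := by omega
      have hsub : i' - j ≤ 2 ^ t := by
        have : 2 ^ (t + 1) = 2 ^ t + 2 ^ t := by ring
        omega
      obtain ⟨m, hm, hs⟩ := ih i' j (by omega) hji' hsub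
      refine ⟨m + 1, by omega, i', ?_, hs⟩
      exact ⟨by omega, hi, t, hlog, le_of_lt hpow, rfl⟩
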